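/- Let μ be a finite measure on X and f ∈ L¹(μ) with f ≥ 0. If g_k : X → [0,1] is a nondecreasing sequence of measurable functions with g_k → 1 μ-a.e. on {f > 0}, and ∫ g_k f dμ → ∫ f dμ, then ∫ g_k f log(c_k g_k f) dμ → ∫ f log f dμ for any sequence c_k → 1 of positive reals, where the convention 0 log 0 = 0 is used and f log f ∈ L¹(μ) is assumed. -/

import Mathlib

open MeasureTheory Filter

theorem entropy_convergence {X : Type*} [MeasurableSpace X] (μ : Measure X)
    [IsFiniteMeasure μ] (f : X → ℝ) (hf : Integrable f μ) (hf0 : ∀ x, 0 ≤ f x)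
    (g : ℕ → X → ℝ) (hgmeas : ∀ k, Measurable (g k))
    (hg01 : ∀ k x, g k x ∈ Set.Icc (0:ℝ) 1)
    (hgmono : ∀ x, Monotone fun k => g k x)
    (hglim : ∀ᵐ x ∂μ, 0 < f x → Tendsto (fun k => g k x) atTop (nhds 1))
    (hgf : Tendsto (fun k => ∫ x, g k x * f x ∂μ) atTop (nhds (∫ x, f x ∂μ)))
    (c : ℕ → ℝ) (hc : ∀ k, 0 < c k) (hclim : Tendsto c atTop (nhds 1))
    (hflogf : Integrable (fun x => f x * Real.log (f x)) μ) :
    Tendsto (fun k => ∫ x, g k x * f x * Real.log (c k * g k x * f x) ∂μ)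
      atTop (nhds (∫ x, f x * Real.log (f x) ∂μ)) := by
  have hgf_int : ∀ k, Integrable (fun x => g k x * f x) μ := by
    intro k
    refine hf.mono ((hgmeas k).aestronglyMeasurable.mul hf.1) ?_
    filter_upwards with x
    rw [Real.norm_eq_abs, Real.norm_eq_abs,
      abs_of_nonneg (mul_nonneg (hg01 k x).1 (hf0 x)), abs_of_nonneg (hf0 x)]
    nlinarith [(hg01 k x).1, (hg01 k x).2, hf0 x]
  have hmeas2 : ∀ k, AEStronglyMeasurable
      (fun x => g k x * f x * Real.log (g k x * f x)) μ := by
    intro k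
    have h1 : AEMeasurable (fun x => g k x * f x) μ :=
      (hgmeas k).aemeasurable.mul hf.aemeasurable
    exact (h1.mul (Real.measurable_log.comp_aemeasurable h1)).aestronglyMeasurable
  have hbound : ∀ k x, ‖g k x * f x * Real.log (g k x * f x)‖ ≤
      1 + |f x * Real.log (f x)| := by
    intro k x
    set t := g k x * f x with ht
    have ht0 : 0 ≤ t := mul_nonneg (hg01 k x).1 (hf0 x)
    have htf : t ≤ f x := by nlinarith [(hg01 k x).1, (hg01 k x).2, hf0 x]
    rw [Real.norm_eq_abs]
    rcases le_or_gt t 1 with h1 | h1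
    · rcases eq_or_lt_of_le ht0 with h0 | h0
      · rw [← h0]; simp [abs_nonneg]; positivity
      · have h := Real.abs_log_mul_self_lt t h0 h1
        calc |t * Real.log t| = |Real.log t * t| := by rw [mul_comm]
          _ ≤ 1 := le_of_lt h
          _ ≤ _ := le_add_of_nonneg_right (abs_nonneg _)
    · have hlt : 0 ≤ Real.log t := Real.log_nonneg h1.le
      have hmono : t * Real.log t ≤ f x * Real.log (f x) := by
        have : Real.log t ≤ Real.log (f x) := Real.log_le_log (by linarith) htf
        nlinarith
      rw [abs_of_nonneg (mul_nonneg ht0 hlt)]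
      calc t * Real.log t ≤ f x * Real.log (f x) := hmono
        _ ≤ |f x * Real.log (f x)| := le_abs_self _
        _ ≤ _ := le_add_of_nonneg_left zero_le_one
  have hA : Tendsto (fun k => ∫ x, g k x * f x * Real.log (g k x * f x) ∂μ) atTop
      (nhds (∫ x, f x * Real.log (f x) ∂μ)) := by
    refine tendsto_integral_of_dominated_convergence
      (fun x => 1 + |f x * Real.log (f x)|) hmeas2
      ((integrable_const 1).add hflogf.abs)
      (fun k => Eventually.of_forall (hbound k)) ?_
    filter_upwards [hglim] with x hx
    have hgfx : Tendsto (fun k => g k x * f x) atTop (nhds (f x)) := by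
      rcases (hf0 x).eq_or_lt with h0 | h0
      · simp only [← h0, mul_zero]; exact tendsto_const_nhds
      · simpa using (hx h0).mul_const (f x)
    have := (Real.continuous_mul_log.tendsto (f x)).comp hgfx
    simpa [Function.comp_def] using this
  have hB : Tendsto (fun k => Real.log (c k) * ∫ x, g k x * f x ∂μ) atTop (nhds 0) := by
    have hlogc : Tendsto (fun k => Real.log (c k)) atTop (nhds 0) := by
      have := ((Real.continuousAt_log one_ne_zero).tendsto).comp hclim
      simpa [Function.comp_def] using this
    simpa using hlogc.mul hgf
  have heq : ∀ k, ∫ x, g k x * f x * Real.log (c k * g k x * f x) ∂μ =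
      (∫ x, g k x * f x * Real.log (g k x * f x) ∂μ) +
      Real.log (c k) * ∫ x, g k x * f x ∂μ := by
    intro k
    rw [← integral_const_mul, ← integral_add ⟨hmeas2 k, ((integrable_norm_iff (hmeas2 k)).mp
      (((integrable_const 1).add hflogf.abs).mono' ((hmeas2 k).norm)
        (Eventually.of_forall fun x => by
          rw [norm_norm]; exact hbound k x))).2⟩ ((hgf_int k).const_mul _)]
    refine integral_congr_ae (Eventually.of_forall fun x => ?_)
    show g k x * f x * Real.log (c k * g k x * f x) =
      g k x * f x * Real.log (g k x * f x) + Real.log (c k) * (g k x * f x)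
    have hassoc : c k * g k x * f x = c k * (g k x * f x) := mul_assoc _ _ _
    rcases eq_or_lt_of_le (mul_nonneg (hg01 k x).1 (hf0 x)) with h0 | h0
    · rw [hassoc, ← h0]; simp
    · rw [hassoc, Real.log_mul (hc k).ne' h0.ne']; ring
  have h := hA.add hB
  rw [add_zero] at h
  exact Tendsto.congr (fun k => (heq k).symm) h
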